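/- (Green's function estimates at step 0.) There exists ε₀* > 0 depending only on v and d such that for all 0 < ε₀ ≤ ε₀* and all 0 < ε ≤ ε₀ the following holds. If a finite set Λ ⊂ ℤ^d satisfies Λ ∩ Q₀ = ∅, then for every θ with |θ − θ*| < δ₀/(10M₁) and every E with |E − E*| < δ₀/5, the matrix H_Λ(θ) − E is invertible, its inverse G_Λ(θ;E) has operator norm at most 10δ₀⁻¹, and |G_Λ(θ;E)(x, y)| ≤ e^{−γ₀‖x−y‖₁} for all x ≠ y in Λ, where γ₀ = (1/2)|log ε|. -/

import Mathlib

open scoped InnerProductSpace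

/-- `‖t‖`: the distance from a real number `t` to the nearest integer. -/
noncomputable def distToInt (t : ℝ) : ℝ := |t - round t|

/-- The ℓ¹ norm `‖x‖₁ = Σᵢ |xᵢ|` on `ℤ^d`. -/
def nrm1 {d : ℕ} (x : Fin d → ℤ) : ℤ := ∑ i, |x i|

/-- The dot product `x·ω` for `x ∈ ℤ^d`, `ω ∈ ℝ^d`. -/
noncomputable def dotw {d : ℕ} (x : Fin d → ℤ) (ω : Fin d → ℝ) : ℝ := ∑ i, (x i : ℝ) * ω i

/-- The ℓ¹ norm on `ℝ^d`. -/
noncomputable def nrm1R {d : ℕ} (x : Fin d → ℝ) : ℝ := ∑ i, |x i|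

/-- The dot product on `ℝ^d`. -/
noncomputable def dotwR {d : ℕ} (x ω : Fin d → ℝ) : ℝ := ∑ i, x i * ω i

/-- The standing hypotheses on the `C²`-cosine like potential `v` with parameter `a`:
`v` is `C²`, even and `1`-periodic, `0` is a nondegenerate maximum, `1/2` is a nondegenerate
minimum, these are the only critical points modulo `1`, `|v''| > 3` near `0` and `1/2`
(within distance `a`), and `|v'| > 3` away from `0` and `1/2`. -/
structure CosLike (v : ℝ → ℝ) (a : ℝ) : Prop where
  smooth : ContDiff ℝ 2 v
  even : ∀ θ, v (-θ) = v θ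
  periodic : ∀ θ, v (θ + 1) = v θ
  a_pos : 0 < a
  a_lt : a < 1 / 10
  critMax : deriv v 0 = 0
  critMax' : deriv (deriv v) 0 < 0
  critMin : deriv v (1 / 2) = 0
  critMin' : 0 < deriv (deriv v) (1 / 2)
  onlyCrit : ∀ θ ∈ Set.Ico (0 : ℝ) 1, deriv v θ = 0 → θ = 0 ∨ θ = 1 / 2
  deriv2_big : ∀ θ, (distToInt θ < a ∨ distToInt (θ - 1 / 2) < a) → 3 < |deriv (deriv v) θ|
  deriv_big : ∀ θ, a ≤ distToInt θ → a ≤ distToInt (θ - 1 / 2) → 3 < |deriv v θ|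

/-- `M₁ = sup_θ max(|v(θ)|, |v'(θ)|, |v''(θ)|)`. -/
noncomputable def M1 (v : ℝ → ℝ) : ℝ :=
  ⨆ θ : ℝ, max |v θ| (max |deriv v θ| |deriv (deriv v) θ|)

/-- The finite-volume Schrödinger operator `H_Λ(θ) = ε Δ + v(θ + x·ω) δ_{x,y}` as a matrix
indexed by a finite set `Λ ⊂ ℤ^d`. -/
noncomputable def Hmat {d : ℕ} (ε : ℝ) (v : ℝ → ℝ) (ω : Fin d → ℝ) (θ : ℝ)
    (Λ : Finset (Fin d → ℤ)) : Matrix Λ Λ ℝ :=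
  Matrix.of fun x y =>
    if nrm1 (x.1 - y.1) = 1 then ε
    else if x = y then v (θ + dotw x.1 ω) else 0

/-- The discrete ℓ¹-ball `{x ∈ ℤ^d : ‖x − c‖₁ ≤ r}` as a `Finset`. -/
noncomputable def ball1 {d : ℕ} (c : Fin d → ℤ) (r : ℝ) : Finset (Fin d → ℤ) :=
  (Finset.Icc (fun i => c i - ⌈r⌉) (fun i => c i + ⌈r⌉)).filter
    fun x => ((nrm1 (x - c) : ℤ) : ℝ) ≤ r

/-- The discrete ℓ¹-ball around a (possibly non-integer) center `c ∈ ℝ^d`. -/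
noncomputable def ballR {d : ℕ} (c : Fin d → ℝ) (r : ℝ) : Finset (Fin d → ℤ) :=
  (Finset.Icc (fun i => ⌊c i - r⌋ - 1) (fun i => ⌈c i + r⌉ + 1)).filter
    fun x => nrm1R (fun i => (x i : ℝ) - c i) ≤ r

/-- The nearest neighbours of `x` in `ℤ^d`. -/
noncomputable def nbrs {d : ℕ} (x : Fin d → ℤ) : Finset (Fin d → ℤ) :=
  (Finset.Icc (fun i => x i - 1) (fun i => x i + 1)).filter fun y => nrm1 (y - x) = 1

/-- `δ₀ = ε₀^{1/20}`. -/
noncomputable def delta0 (ε₀ : ℝ) : ℝ := ε₀ ^ ((1 : ℝ) / 20)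

/-- Green's function estimates at step 0: there is `ε₀* > 0` depending only on
`v` and `d` such that for `0 < ε₀ ≤ ε₀*`, `0 < ε ≤ ε₀`, any finite `Λ ⊂ ℤ^d` with
`Λ ∩ Q₀ = ∅`, any `θ` with `|θ − θ*| < δ₀/(10M₁)` and `E` with `|E − E*| < δ₀/5`,
the matrix `H_Λ(θ) − E` is invertible, `‖G_Λ(θ;E)‖ ≤ 10δ₀⁻¹`, and
`|G_Λ(θ;E)(x,y)| ≤ e^{−γ₀‖x−y‖₁}` for `x ≠ y`, where `γ₀ = |log ε|/2`. -/
-- ## nrm1 lemmas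

@[simp] lemma nrm1_zero {d : ℕ} : nrm1 (0 : Fin d → ℤ) = 0 := by simp [nrm1]

lemma nrm1_nonneg {d : ℕ} (z : Fin d → ℤ) : 0 ≤ nrm1 z :=
  Finset.sum_nonneg fun i _ => abs_nonneg _

lemma nrm1_eq_zero {d : ℕ} {z : Fin d → ℤ} (h : nrm1 z = 0) : z = 0 := by
  have := (Finset.sum_eq_zero_iff_of_nonneg (fun i _ => abs_nonneg (z i))).mp h
  funext i
  simpa using abs_eq_zero.mp (this i (Finset.mem_univ i))

lemma nrm1_triangle {d : ℕ} (p q : Fin d → ℤ) : nrm1 (p + q) ≤ nrm1 p + nrm1 q := by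
  rw [nrm1, nrm1, nrm1, ← Finset.sum_add_distrib]
  exact Finset.sum_le_sum fun i _ => abs_add_le _ _

lemma nrm1_neg {d : ℕ} (z : Fin d → ℤ) : nrm1 (-z) = nrm1 z := by
  unfold nrm1
  exact Finset.sum_congr rfl fun i _ => abs_neg _

lemma nrm1_sub_comm {d : ℕ} (p q : Fin d → ℤ) : nrm1 (p - q) = nrm1 (q - p) := by
  rw [← nrm1_neg (q - p), neg_sub]

-- ## unit vectors

lemma unit_vec {d : ℕ} {z : Fin d → ℤ} (hz : nrm1 z = 1) :
    ∃ p : Fin d × Bool, z = fun j => if j = p.1 then (if p.2 then 1 else -1) else 0 := by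
  classical
  have h0 : ∃ i, z i ≠ 0 := by
    by_contra h
    push_neg at h
    simp [nrm1, h] at hz
  obtain ⟨i, hi⟩ := h0
  have h1 : 1 ≤ |z i| := Int.one_le_abs hi
  have hsum : |z i| + ∑ j ∈ Finset.univ.erase i, |z j| = 1 := by
    rw [← hz, nrm1]
    exact Finset.add_sum_erase _ (fun j => |z j|) (Finset.mem_univ i)
  have hnn : 0 ≤ ∑ j ∈ Finset.univ.erase i, |z j| :=
    Finset.sum_nonneg fun j _ => abs_nonneg _
  have hzero : ∑ j ∈ Finset.univ.erase i, |z j| = 0 := by omega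
  have herase : ∀ j, j ≠ i → z j = 0 := by
    intro j hj
    have := (Finset.sum_eq_zero_iff_of_nonneg (fun j _ => abs_nonneg (z j))).mp hzero j
      (Finset.mem_erase.mpr ⟨hj, Finset.mem_univ j⟩)
    exact abs_eq_zero.mp this
  have hzi : |z i| = 1 := by omega
  rcases (abs_eq (by norm_num : (0:ℤ) ≤ 1)).mp hzi with h | h
  · refine ⟨(i, true), funext fun j => ?_⟩
    by_cases hj : j = i
    · subst hj; simpa using h
    · simpa [hj] using herase j hj
  · refine ⟨(i, false), funext fun j => ?_⟩
    by_cases hj : j = i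
    · subst hj; simpa using h
    · simpa [hj] using herase j hj

-- ## neighbour counting

lemma card_nbrs {d : ℕ} (Λ : Finset (Fin d → ℤ)) (c : Fin d → ℤ) :
    ((Finset.univ : Finset {z // z ∈ Λ}).filter fun y => nrm1 (y.1 - c) = 1).card ≤ 2 * d := by
  classical
  set S := (Finset.univ : Finset {z // z ∈ Λ}).filter fun y => nrm1 (y.1 - c) = 1 with hS
  have hinj : S.card = (S.image (fun y => y.1)).card :=
    (Finset.card_image_of_injective _ Subtype.val_injective).symm
  have hsub : S.image (fun y => y.1) ⊆ (Finset.univ : Finset (Fin d × Bool)).image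
      (fun p => fun j => c j + (if j = p.1 then (if p.2 then 1 else -1) else 0)) := by
    intro y hy
    simp only [Finset.mem_image] at hy ⊢
    obtain ⟨y', hy', rfl⟩ := hy
    have hmem : nrm1 (y'.1 - c) = 1 := by
      simp only [hS, Finset.mem_filter] at hy'
      exact hy'.2
    obtain ⟨p, hp⟩ := unit_vec hmem
    refine ⟨p, Finset.mem_univ p, funext fun j => ?_⟩
    have h := congrFun hp j
    simp only [Pi.sub_apply] at h
    omega
  calc S.card = (S.image (fun y => y.1)).card := hinj
    _ ≤ ((Finset.univ : Finset (Fin d × Bool)).image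
        (fun p => fun j => c j + (if j = p.1 then (if p.2 then 1 else -1) else 0))).card :=
        Finset.card_le_card hsub
    _ ≤ (Finset.univ : Finset (Fin d × Bool)).card := Finset.card_image_le
    _ = 2 * d := by simp [Fintype.card_prod]; ring

lemma sum_ite_nbr_le {d : ℕ} (Λ : Finset (Fin d → ℤ)) (c : Fin d → ℤ) {t : ℝ} (ht : 0 ≤ t) :
    ∑ y : {z // z ∈ Λ}, (if nrm1 (y.1 - c) = 1 then t else 0) ≤ 2 * d * t := by
  classical
  rw [← Finset.sum_filter]
  rw [Finset.sum_const, nsmul_eq_mul]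
  calc (((Finset.univ : Finset {z // z ∈ Λ}).filter fun y => nrm1 (y.1 - c) = 1).card : ℝ) * t
      ≤ (2 * d : ℕ) * t := by
        apply mul_le_mul_of_nonneg_right _ ht
        exact_mod_cast card_nbrs Λ c
    _ = 2 * d * t := by push_cast; ring

-- ## M1 lemmas

lemma periodic_deriv' (f : ℝ → ℝ) (hf : ∀ θ, f (θ + 1) = f θ) (θ : ℝ) :
    deriv f (θ + 1) = deriv f θ := by
  have : deriv (fun y => f (y + 1)) θ = deriv f (θ + 1) := by
    simpa using deriv_comp_add_const f 1 θ
  rw [← this]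
  congr 1
  funext y
  exact hf y

lemma M1_aux (v : ℝ → ℝ) (a : ℝ) (hv : CosLike v a) :
    BddAbove (Set.range fun θ : ℝ => max |v θ| (max |deriv v θ| |deriv (deriv v) θ|)) := by
  set f := fun θ : ℝ => max |v θ| (max |deriv v θ| |deriv (deriv v) θ|) with hf
  have hd1 : ContDiff ℝ 1 (deriv v) := by
    have h2 : ContDiff ℝ ((1 : ℕ) + 1) v := by exact_mod_cast hv.smooth
    exact (contDiff_succ_iff_deriv.mp h2).2.2
  have hcont : Continuous f := by
    refine Continuous.max hv.smooth.continuous.abs (Continuous.max ?_ ?_)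
    · exact hd1.continuous.abs
    · exact (hd1.continuous_deriv le_rfl).abs
  have hper : Function.Periodic f 1 := by
    intro θ
    have h1 : deriv v (θ + 1) = deriv v θ := periodic_deriv' v hv.periodic θ
    have h2 : deriv (deriv v) (θ + 1) = deriv (deriv v) θ :=
      periodic_deriv' (deriv v) (fun t => periodic_deriv' v hv.periodic t) θ
    simp only [hf, hv.periodic, h1, h2]
  have := (hper.isBounded_of_continuous one_ne_zero hcont)
  exact this.bddAbove

lemma abs_deriv_le_M1 (v : ℝ → ℝ) (a : ℝ) (hv : CosLike v a) (θ : ℝ) :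
    |deriv v θ| ≤ M1 v := by
  have h := le_ciSup (M1_aux v a hv) θ
  exact le_trans (le_max_of_le_right (le_max_left _ _)) h

lemma M1_ge_three (v : ℝ → ℝ) (a : ℝ) (hv : CosLike v a) : 3 ≤ M1 v := by
  have hbig : 3 < |deriv (deriv v) 0| := by
    apply hv.deriv2_big 0
    left
    simpa [distToInt] using hv.a_pos
  have h := le_ciSup (M1_aux v a hv) 0
  have : |deriv (deriv v) 0| ≤ max |v 0| (max |deriv v 0| |deriv (deriv v) 0|) :=
    le_max_of_le_right (le_max_right _ _)
  unfold M1
  linarith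

lemma v_lipschitz (v : ℝ → ℝ) (a : ℝ) (hv : CosLike v a) (s t : ℝ) :
    |v s - v t| ≤ M1 v * |s - t| := by
  have := convex_univ.norm_image_sub_le_of_norm_deriv_le
    (f := v) (fun x _ => (hv.smooth.differentiable (by norm_num)).differentiableAt)
    (fun x _ => by simpa [Real.norm_eq_abs] using abs_deriv_le_M1 v a hv x)
    (Set.mem_univ t) (Set.mem_univ s)
  simpa [Real.norm_eq_abs] using this

-- ## delta0 lemmas

lemma delta0_pow {ε₀ : ℝ} (h : 0 < ε₀) : (delta0 ε₀) ^ (20 : ℕ) = ε₀ := by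
  rw [delta0, ← Real.rpow_natCast (ε₀ ^ ((1:ℝ)/20)) 20, ← Real.rpow_mul h.le]
  norm_num

lemma delta0_pos {ε₀ : ℝ} (h : 0 < ε₀) : 0 < delta0 ε₀ :=
  Real.rpow_pos_of_pos h _

lemma delta0_le {ε₀ κ : ℝ} (h : 0 < ε₀) (hκ : 0 < κ) (hle : ε₀ ≤ κ ^ (20 : ℕ)) :
    delta0 ε₀ ≤ κ := by
  have h1 : delta0 ε₀ ≤ (κ ^ (20:ℕ)) ^ ((1:ℝ)/20) :=
    Real.rpow_le_rpow h.le hle (by norm_num)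
  have h2 : (κ ^ (20:ℕ)) ^ ((1:ℝ)/20) = κ := by
    rw [← Real.rpow_natCast κ 20, ← Real.rpow_mul hκ.le]
    norm_num
  rwa [h2] at h1

-- ## matrix power bounds

lemma row_abs_sum_le {d : ℕ} {Λ : Finset (Fin d → ℤ)} {β : ℝ} (hβ : 0 ≤ β)
    (R : Matrix {z // z ∈ Λ} {z // z ∈ Λ} ℝ)
    (hR : ∀ x y, |R x y| ≤ if nrm1 (x.1 - y.1) = 1 then β else 0) (x : {z // z ∈ Λ}) :
    ∑ z, |R x z| ≤ 2 * d * β := by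
  calc ∑ z, |R x z| ≤ ∑ z : {z // z ∈ Λ}, (if nrm1 (z.1 - x.1) = 1 then β else 0) := by
        apply Finset.sum_le_sum
        intro z _
        rw [nrm1_sub_comm]
        exact hR x z
    _ ≤ 2 * d * β := sum_ite_nbr_le Λ x.1 hβ

lemma entry_eq_zero_of_not_nbr {d : ℕ} {Λ : Finset (Fin d → ℤ)} {β : ℝ}
    {R : Matrix {z // z ∈ Λ} {z // z ∈ Λ} ℝ}
    (hR : ∀ x y, |R x y| ≤ if nrm1 (x.1 - y.1) = 1 then β else 0) {x y : {z // z ∈ Λ}}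
    (h : ¬ nrm1 (x.1 - y.1) = 1) : R x y = 0 := by
  have h1 := hR x y
  rw [if_neg h] at h1
  exact abs_eq_zero.mp (le_antisymm h1 (abs_nonneg _))

lemma mat_pow_bound {d : ℕ} {Λ : Finset (Fin d → ℤ)} {β : ℝ} (hβ : 0 ≤ β)
    (R : Matrix {z // z ∈ Λ} {z // z ∈ Λ} ℝ)
    (hR : ∀ x y, |R x y| ≤ if nrm1 (x.1 - y.1) = 1 then β else 0) (k : ℕ) :
    (∀ x, ∑ y, |(R ^ k) x y| ≤ (2 * d * β) ^ k) ∧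
    (∀ x y, (k : ℤ) < nrm1 (x.1 - y.1) → (R ^ k) x y = 0) := by
  classical
  induction k with
  | zero =>
    constructor
    · intro x
      rw [pow_zero, pow_zero]
      calc ∑ y, |(1 : Matrix {z // z ∈ Λ} {z // z ∈ Λ} ℝ) x y|
          = ∑ y : {z // z ∈ Λ}, (if x = y then (1:ℝ) else 0) := by
            apply Finset.sum_congr rfl
            intro y _
            rw [Matrix.one_apply]
            split_ifs <;> simp
        _ = if x ∈ Finset.univ then (1:ℝ) else 0 := Finset.sum_ite_eq _ x (fun _ => (1:ℝ))
        _ ≤ 1 := by simp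
    · intro x y hxy
      rw [pow_zero]
      apply Matrix.one_apply_ne
      intro h
      rw [h, sub_self] at hxy
      simp [nrm1] at hxy
  | succ k ih =>
    have hpow : R ^ (k + 1) = R * R ^ k := pow_succ' R k
    constructor
    · intro x
      have h2 : (0:ℝ) ≤ 2 * d * β := by positivity
      calc ∑ y, |(R ^ (k+1)) x y| = ∑ y, |∑ z, R x z * (R ^ k) z y| := by
            rw [hpow]; simp [Matrix.mul_apply]
        _ ≤ ∑ y, ∑ z, |R x z * (R ^ k) z y| :=
            Finset.sum_le_sum fun y _ => Finset.abs_sum_le_sum_abs _ _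
        _ = ∑ z, ∑ y, |R x z| * |(R ^ k) z y| := by
            rw [Finset.sum_comm]
            simp [abs_mul]
        _ = ∑ z, |R x z| * ∑ y, |(R ^ k) z y| := by
            simp [Finset.mul_sum]
        _ ≤ ∑ z, |R x z| * (2 * d * β) ^ k := by
            apply Finset.sum_le_sum
            intro z _
            exact mul_le_mul_of_nonneg_left ((ih.1) z) (abs_nonneg _)
        _ = (∑ z, |R x z|) * (2 * d * β) ^ k := by rw [Finset.sum_mul]
        _ ≤ (2 * d * β) * (2 * d * β) ^ k := by
            apply mul_le_mul_of_nonneg_right (row_abs_sum_le hβ R hR x) (by positivity)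
        _ = (2 * d * β) ^ (k + 1) := (pow_succ' _ _).symm
    · intro x y hxy
      rw [hpow, Matrix.mul_apply]
      apply Finset.sum_eq_zero
      intro z _
      by_cases hz : nrm1 (x.1 - z.1) = 1
      · have htri : nrm1 (x.1 - y.1) ≤ nrm1 (x.1 - z.1) + nrm1 (z.1 - y.1) := by
          have := nrm1_triangle (x.1 - z.1) (z.1 - y.1)
          rwa [sub_add_sub_cancel] at this
        have : (k : ℤ) < nrm1 (z.1 - y.1) := by
          push_cast at hxy ⊢
          omega
        rw [ih.2 z y this, mul_zero]
      · rw [entry_eq_zero_of_not_nbr hR hz, zero_mul]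

-- ## quadratic form bounds

lemma schur_bound {d : ℕ} {Λ : Finset (Fin d → ℤ)} {ε : ℝ} (hε : 0 ≤ ε)
    (Am : Matrix {z // z ∈ Λ} {z // z ∈ Λ} ℝ)
    (hA : ∀ x y, Am x y = if nrm1 (x.1 - y.1) = 1 then ε else 0)
    (g : {z // z ∈ Λ} → ℝ) :
    ∑ x, (Am.mulVec g x) ^ 2 ≤ (2 * d * ε) ^ 2 * ∑ x, g x ^ 2 := by
  classical
  have hAnn : ∀ x y, 0 ≤ Am x y := by
    intro x y; rw [hA]; split_ifs <;> simp [hε]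
  have hrowA : ∀ x : {z // z ∈ Λ}, ∑ y, Am x y ≤ 2 * d * ε := by
    intro x
    calc ∑ y, Am x y ≤ ∑ y : {z // z ∈ Λ}, (if nrm1 (y.1 - x.1) = 1 then ε else 0) := by
          apply Finset.sum_le_sum
          intro y _
          rw [hA, nrm1_sub_comm]
      _ ≤ 2 * d * ε := sum_ite_nbr_le Λ x.1 hε
  have hcolA : ∀ y : {z // z ∈ Λ}, ∑ x, Am x y ≤ 2 * d * ε := by
    intro y
    calc ∑ x, Am x y ≤ ∑ x : {z // z ∈ Λ}, (if nrm1 (x.1 - y.1) = 1 then ε else 0) := by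
          apply Finset.sum_le_sum
          intro x _
          rw [hA]
      _ ≤ 2 * d * ε := sum_ite_nbr_le Λ y.1 hε
  have hrow : ∀ x : {z // z ∈ Λ},
      (Am.mulVec g x) ^ 2 ≤ (2 * d * ε) * ∑ y, Am x y * g y ^ 2 := by
    intro x
    have hCS := Finset.sum_sq_le_sum_mul_sum_of_sq_eq_mul Finset.univ
      (r := fun y => Am x y * g y) (f := fun y => Am x y) (g := fun y => Am x y * g y ^ 2)
      (fun y _ => hAnn x y) (fun y _ => mul_nonneg (hAnn x y) (sq_nonneg _))
      (fun y _ => by ring)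
    have hmv : Am.mulVec g x = ∑ y, Am x y * g y := by
      simp [Matrix.mulVec, dotProduct]
    rw [hmv]
    refine hCS.trans ?_
    apply mul_le_mul_of_nonneg_right (hrowA x)
    exact Finset.sum_nonneg fun y _ => mul_nonneg (hAnn x y) (sq_nonneg _)
  calc ∑ x, (Am.mulVec g x) ^ 2 ≤ ∑ x, (2 * d * ε) * ∑ y, Am x y * g y ^ 2 :=
        Finset.sum_le_sum fun x _ => hrow x
    _ = (2 * d * ε) * ∑ y, (∑ x, Am x y) * g y ^ 2 := by
        rw [← Finset.mul_sum, Finset.sum_comm]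
        congr 1
        apply Finset.sum_congr rfl
        intro y _
        rw [Finset.sum_mul]
    _ ≤ (2 * d * ε) * ∑ y, (2 * d * ε) * g y ^ 2 := by
        apply mul_le_mul_of_nonneg_left _ (by positivity)
        apply Finset.sum_le_sum
        intro y _
        exact mul_le_mul_of_nonneg_right (hcolA y) (sq_nonneg _)
    _ = (2 * d * ε) ^ 2 * ∑ x, g x ^ 2 := by
        rw [← Finset.mul_sum]
        ring

lemma diag_lower {ι : Type*} [Fintype ι] [DecidableEq ι] {c : ℝ} (hc0 : 0 ≤ c)
    (dv : ι → ℝ) (hc : ∀ x, c ≤ |dv x|) (g : ι → ℝ) :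
    c ^ 2 * ∑ x, g x ^ 2 ≤ ∑ x, ((Matrix.diagonal dv).mulVec g x) ^ 2 := by
  rw [Finset.mul_sum]
  apply Finset.sum_le_sum
  intro x _
  rw [Matrix.mulVec_diagonal]
  have h1 : c ^ 2 ≤ dv x ^ 2 := by
    have h2 := hc x
    have h3 : c ≤ |dv x| := h2
    nlinarith [abs_nonneg (dv x), sq_abs (dv x), hc0]
  calc c ^ 2 * g x ^ 2 ≤ dv x ^ 2 * g x ^ 2 :=
        mul_le_mul_of_nonneg_right h1 (sq_nonneg _)
    _ = (dv x * g x) ^ 2 := by ring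

-- ## iteration identity

lemma green_iter {R : Type*} [Ring R] {G N P : R} (h : G = N - P * G) (k : ℕ) :
    G = (∑ j ∈ Finset.range k, (-P) ^ j) * N + (-P) ^ k * G := by
  induction k with
  | zero => simp
  | succ k ih =>
    have h2 : (-P) ^ k * G = (-P) ^ k * N + ((-P) ^ k * (-P)) * G := by
      conv_lhs => rw [h]
      noncomm_ring
    rw [Finset.sum_range_succ, add_mul, pow_succ, add_assoc, ← h2]
    exact ih

-- ## Euclidean glue

lemma euc_norm_sq {ι : Type*} [Fintype ι] (ψ : EuclideanSpace ℝ ι) :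
    ‖ψ‖ = Real.sqrt (∑ x, ψ x ^ 2) := by
  rw [EuclideanSpace.norm_eq]
  congr 1
  apply Finset.sum_congr rfl
  intro x _
  rw [Real.norm_eq_abs, sq_abs]

lemma toE_coord {ι : Type*} [Fintype ι] [DecidableEq ι] (A : Matrix ι ι ℝ)
    (ψ : EuclideanSpace ℝ ι) (x : ι) :
    (Matrix.toEuclideanCLM (𝕜 := ℝ) A ψ) x = A.mulVec (fun y => ψ y) x := by
  have h1 : ψ = (WithLp.equiv 2 (ι → ℝ)).symm (fun y => ψ y) := by
    apply (WithLp.equiv 2 (ι → ℝ)).injective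
    funext y
    rfl
  conv_lhs => rw [h1]
  rfl

set_option maxHeartbeats 1000000 in
theorem statement3 (v : ℝ → ℝ) (a : ℝ) (hv : CosLike v a) (d : ℕ) :
    ∃ ε₀star > (0 : ℝ), ∀ ε₀ ε : ℝ, 0 < ε₀ → ε₀ ≤ ε₀star → 0 < ε → ε ≤ ε₀ →
      ∀ ω : Fin d → ℝ, (∀ i, ω i ∈ Set.Icc (0 : ℝ) 1) →
      ∀ (θs Es : ℝ) (Λ : Finset (Fin d → ℤ)),
        (∀ x ∈ Λ, ¬ |v (θs + dotw x ω) - Es| < delta0 ε₀) →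
        ∀ θ E : ℝ, |θ - θs| < delta0 ε₀ / (10 * M1 v) → |E - Es| < delta0 ε₀ / 5 →
          IsUnit (Hmat ε v ω θ Λ - E • 1) ∧
          ‖(Matrix.toEuclideanCLM (𝕜 := ℝ) ((Hmat ε v ω θ Λ - E • 1)⁻¹) :
            EuclideanSpace ℝ Λ →L[ℝ] EuclideanSpace ℝ Λ)‖ ≤ 10 / delta0 ε₀ ∧
          ∀ x y : Λ, x ≠ y →
            |((Hmat ε v ω θ Λ - E • 1)⁻¹) x y|
              ≤ Real.exp (-(|Real.log ε| / 2) * (nrm1 (x.1 - y.1) : ℝ)) := by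
  classical
  set K : ℝ := 400 * ((d : ℝ) + 1) with hK
  have hKpos : 0 < K := by positivity
  refine ⟨K⁻¹ ^ (20 : ℕ), by positivity, ?_⟩
  intro ε₀ ε hε₀ hε₀star hε hεε₀ ω hω θs Es Λ hQ θ E hθ hE
  set δ : ℝ := delta0 ε₀ with hδdef
  have hδpos : 0 < δ := delta0_pos hε₀
  have hδκ : δ ≤ K⁻¹ := delta0_le hε₀ (by positivity) hε₀star
  have hK1 : K⁻¹ ≤ 1 := by
    rw [hK]
    rw [inv_le_one_iff₀]
    right
    have : (0:ℝ) ≤ (d:ℝ) := Nat.cast_nonneg d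
    linarith
  have hδ1 : δ ≤ 1 := hδκ.trans hK1
  have hε20 : ε ≤ δ ^ (20 : ℕ) := by
    rw [hδdef, delta0_pow hε₀]
    exact hεε₀
  have hεnn : 0 ≤ ε := hε.le
  have hM3 : 3 ≤ M1 v := M1_ge_three v a hv
  -- diagonal entries
  set dv : {z // z ∈ Λ} → ℝ := fun x => v (θ + dotw x.1 ω) - E with hdv
  have hdiag : ∀ x : {z // z ∈ Λ}, 7 / 10 * δ ≤ |dv x| := by
    intro x
    have h1 : δ ≤ |v (θs + dotw x.1 ω) - Es| := not_lt.mp (hQ x.1 x.2)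
    have h2 : |v (θ + dotw x.1 ω) - v (θs + dotw x.1 ω)| ≤ M1 v * |θ - θs| := by
      have h := v_lipschitz v a hv (θ + dotw x.1 ω) (θs + dotw x.1 ω)
      simpa using h
    have h3 : M1 v * |θ - θs| ≤ δ / 10 := by
      have hM0 : 0 < M1 v := by linarith
      have h4 := mul_lt_mul_of_pos_left hθ hM0
      have h5 : M1 v * (δ / (10 * M1 v)) = δ / 10 := by
        field_simp
      rw [h5] at h4
      linarith
    have h6 : |v (θs + dotw x.1 ω) - Es| ≤
        |v (θ + dotw x.1 ω) - E| + |v (θ + dotw x.1 ω) - v (θs + dotw x.1 ω)| + |E - Es| := by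
      have hsum : v (θs + dotw x.1 ω) - Es =
          (v (θ + dotw x.1 ω) - E) + -(v (θ + dotw x.1 ω) - v (θs + dotw x.1 ω)) + -(Es - E) := by
        ring
      rw [hsum]
      calc |(v (θ + dotw x.1 ω) - E) + -(v (θ + dotw x.1 ω) - v (θs + dotw x.1 ω)) + -(Es - E)|
          ≤ |v (θ + dotw x.1 ω) - E| + |-(v (θ + dotw x.1 ω) - v (θs + dotw x.1 ω))| + |-(Es - E)| :=
            abs_add_three _ _ _
        _ = _ := by rw [abs_neg, abs_neg, abs_sub_comm Es E]
    have := abs_nonneg (v (θ + dotw x.1 ω) - E)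
    simp only [hdv]
    linarith
  set T : Matrix {z // z ∈ Λ} {z // z ∈ Λ} ℝ := Hmat ε v ω θ Λ - E • 1 with hTdef
  have hT : ∀ x y, T x y = if nrm1 (x.1 - y.1) = 1 then ε else if x = y then dv x else 0 := by
    intro x y
    have h0 : T x y = (if nrm1 (x.1 - y.1) = 1 then ε else if x = y then v (θ + dotw x.1 ω) else 0)
        - E * (if x = y then 1 else 0) := by
      simp only [hTdef, Matrix.sub_apply, Matrix.smul_apply, Matrix.one_apply, smul_eq_mul,
        Hmat, Matrix.of_apply]
    rw [h0]
    by_cases h1 : nrm1 (x.1 - y.1) = 1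
    · have hxy : ¬ x = y := by
        intro h
        subst h
        rw [sub_self] at h1
        simp [nrm1] at h1
      simp [h1, hxy]
    · by_cases h2 : x = y
      · simp [h1, h2, hdv, nrm1_zero]
      · simp [h1, h2]
  set Dm : Matrix {z // z ∈ Λ} {z // z ∈ Λ} ℝ := Matrix.diagonal dv with hDm
  set Am : Matrix {z // z ∈ Λ} {z // z ∈ Λ} ℝ :=
    Matrix.of (fun x y => if nrm1 (x.1 - y.1) = 1 then ε else 0) with hAm
  have hAm' : ∀ x y, Am x y = if nrm1 (x.1 - y.1) = 1 then ε else 0 := fun x y => rfl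
  have hTDA : T = Dm + Am := by
    ext x y
    rw [hT, Matrix.add_apply, hAm', hDm, Matrix.diagonal_apply]
    by_cases h1 : nrm1 (x.1 - y.1) = 1
    · have hxy : ¬ x = y := by
        intro h
        subst h
        rw [sub_self] at h1
        simp [nrm1] at h1
      simp [h1, hxy]
    · by_cases h2 : x = y
      · simp [h1, h2, nrm1_zero]
      · simp [h1, h2]
  -- smallness of ε
  have hεsmall : 2 * (d:ℝ) * ε ≤ 6 / 10 * δ := by
    have hδ20 : δ ^ (20:ℕ) ≤ δ ^ (2:ℕ) := pow_le_pow_of_le_one hδpos.le hδ1 (by norm_num)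
    have h1 : ε ≤ δ * δ := by
      have := hε20.trans hδ20
      nlinarith
    have hd0 : (0:ℝ) ≤ (d:ℝ) := Nat.cast_nonneg d
    have h2 : 2 * (d:ℝ) * K⁻¹ ≤ 6 / 10 := by
      rw [hK, inv_eq_one_div, mul_one_div, div_le_iff₀ (by positivity)]
      nlinarith
    have h3 : 2 * (d:ℝ) * ε ≤ 2 * d * (δ * δ) := by nlinarith
    have hδδ : δ * δ ≤ K⁻¹ * δ := mul_le_mul_of_nonneg_right hδκ hδpos.le
    have h4 : 2 * (d:ℝ) * (δ * δ) ≤ 2 * d * (K⁻¹ * δ) := by nlinarith [hδδ, hd0]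
    have h5 : 2 * (d:ℝ) * (K⁻¹ * δ) = (2 * d * K⁻¹) * δ := by ring
    have h6 : (2 * (d:ℝ) * K⁻¹) * δ ≤ 6 / 10 * δ := mul_le_mul_of_nonneg_right h2 hδpos.le
    linarith
  -- quadratic form bounds
  have hDq : ∀ g : {z // z ∈ Λ} → ℝ,
      (7/10*δ) ^ 2 * ∑ x, g x ^ 2 ≤ ∑ x, (Dm.mulVec g x) ^ 2 :=
    fun g => diag_lower (by positivity) dv hdiag g
  have hAq : ∀ g : {z // z ∈ Λ} → ℝ,
      ∑ x, (Am.mulVec g x) ^ 2 ≤ (2 * d * ε) ^ 2 * ∑ x, g x ^ 2 :=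
    fun g => schur_bound hεnn Am hAm' g
  -- Euclidean norm bounds
  have hnormD : ∀ ψ : EuclideanSpace ℝ {z // z ∈ Λ},
      7/10*δ * ‖ψ‖ ≤ ‖Matrix.toEuclideanCLM (𝕜 := ℝ) Dm ψ‖ := by
    intro ψ
    rw [euc_norm_sq ψ, euc_norm_sq (Matrix.toEuclideanCLM (𝕜 := ℝ) Dm ψ)]
    have h1 : (7/10*δ) * Real.sqrt (∑ x, ψ x ^ 2)
        = Real.sqrt ((7/10*δ)^2 * ∑ x, ψ x ^ 2) := by
      rw [Real.sqrt_mul (sq_nonneg _), Real.sqrt_sq (by positivity)]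
    rw [h1]
    apply Real.sqrt_le_sqrt
    calc (7/10*δ)^2 * ∑ x, ψ x ^ 2 ≤ ∑ x, (Dm.mulVec (fun y => ψ y) x) ^ 2 := hDq _
      _ = ∑ x, (Matrix.toEuclideanCLM (𝕜 := ℝ) Dm ψ x) ^ 2 := by
          apply Finset.sum_congr rfl
          intro x _
          rw [toE_coord]
  have hnormA : ∀ ψ : EuclideanSpace ℝ {z // z ∈ Λ},
      ‖Matrix.toEuclideanCLM (𝕜 := ℝ) Am ψ‖ ≤ 2 * d * ε * ‖ψ‖ := by
    intro ψ
    rw [euc_norm_sq ψ, euc_norm_sq (Matrix.toEuclideanCLM (𝕜 := ℝ) Am ψ)]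
    have h1 : (2*d*ε) * Real.sqrt (∑ x, ψ x ^ 2)
        = Real.sqrt ((2*d*ε)^2 * ∑ x, ψ x ^ 2) := by
      rw [Real.sqrt_mul (sq_nonneg _), Real.sqrt_sq (by positivity)]
    rw [h1]
    apply Real.sqrt_le_sqrt
    calc ∑ x, (Matrix.toEuclideanCLM (𝕜 := ℝ) Am ψ x) ^ 2
        = ∑ x, (Am.mulVec (fun y => ψ y) x) ^ 2 := by
          apply Finset.sum_congr rfl
          intro x _
          rw [toE_coord]
      _ ≤ (2*d*ε)^2 * ∑ x, ψ x ^ 2 := hAq _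
  have key : ∀ ψ : EuclideanSpace ℝ {z // z ∈ Λ},
      δ/10 * ‖ψ‖ ≤ ‖Matrix.toEuclideanCLM (𝕜 := ℝ) T ψ‖ := by
    intro ψ
    have hsplit : Matrix.toEuclideanCLM (𝕜 := ℝ) T ψ
        = Matrix.toEuclideanCLM (𝕜 := ℝ) Dm ψ + Matrix.toEuclideanCLM (𝕜 := ℝ) Am ψ := by
      rw [hTDA, map_add, ContinuousLinearMap.add_apply]
    have htri : ‖Matrix.toEuclideanCLM (𝕜 := ℝ) Dm ψ‖
        ≤ ‖Matrix.toEuclideanCLM (𝕜 := ℝ) T ψ‖ + ‖Matrix.toEuclideanCLM (𝕜 := ℝ) Am ψ‖ := by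
      have h1 : Matrix.toEuclideanCLM (𝕜 := ℝ) Dm ψ
          = Matrix.toEuclideanCLM (𝕜 := ℝ) T ψ + -(Matrix.toEuclideanCLM (𝕜 := ℝ) Am ψ) := by
        rw [hsplit]
        abel
      rw [h1]
      calc ‖Matrix.toEuclideanCLM (𝕜 := ℝ) T ψ + -(Matrix.toEuclideanCLM (𝕜 := ℝ) Am ψ)‖
          ≤ ‖Matrix.toEuclideanCLM (𝕜 := ℝ) T ψ‖ + ‖-(Matrix.toEuclideanCLM (𝕜 := ℝ) Am ψ)‖ :=
            norm_add_le _ _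
        _ = _ := by rw [norm_neg]
    have h2 := hnormD ψ
    have h3 := hnormA ψ
    have h4 : 2 * (d:ℝ) * ε * ‖ψ‖ ≤ 6/10 * δ * ‖ψ‖ :=
      mul_le_mul_of_nonneg_right hεsmall (norm_nonneg ψ)
    have h5 : (0:ℝ) ≤ ‖ψ‖ := norm_nonneg ψ
    nlinarith
  -- invertibility
  have hker : ∀ g : {z // z ∈ Λ} → ℝ, T.mulVec g = 0 → g = 0 := by
    intro g hg
    set ψg : EuclideanSpace ℝ {z // z ∈ Λ} := (WithLp.equiv 2 _).symm g with hψg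
    have hco : ∀ x, ψg x = g x := fun x => rfl
    have hTψ : Matrix.toEuclideanCLM (𝕜 := ℝ) T ψg = 0 := by
      ext x
      rw [toE_coord]
      have : (fun y => ψg y) = g := funext hco
      rw [this, hg]; rfl
    have hψ := key ψg
    rw [hTψ, norm_zero] at hψ
    have h0 : ‖ψg‖ = 0 := le_antisymm (by nlinarith [norm_nonneg ψg]) (norm_nonneg _)
    have hψ0 : ψg = 0 := norm_eq_zero.mp h0
    funext x
    rw [← hco x, hψ0]; rfl
  have hinj : Function.Injective T.mulVec := by
    intro g1 g2 h12
    have h0 : T.mulVec (g1 - g2) = 0 := by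
      rw [Matrix.mulVec_sub, h12, sub_self]
    exact sub_eq_zero.mp (hker _ h0)
  have hUnit : IsUnit T := Matrix.mulVec_injective_iff_isUnit.mp hinj
  have hdetU : IsUnit T.det := (Matrix.isUnit_iff_isUnit_det T).mp hUnit
  have hTG : T * T⁻¹ = 1 := Matrix.mul_nonsing_inv T hdetU
  -- operator norm of inverse
  have hGnorm : ∀ φ : EuclideanSpace ℝ {z // z ∈ Λ},
      ‖Matrix.toEuclideanCLM (𝕜 := ℝ) T⁻¹ φ‖ ≤ 10/δ * ‖φ‖ := by
    intro φ
    have h1 := key (Matrix.toEuclideanCLM (𝕜 := ℝ) T⁻¹ φ)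
    have h2 : Matrix.toEuclideanCLM (𝕜 := ℝ) T (Matrix.toEuclideanCLM (𝕜 := ℝ) T⁻¹ φ) = φ := by
      calc Matrix.toEuclideanCLM (𝕜 := ℝ) T (Matrix.toEuclideanCLM (𝕜 := ℝ) T⁻¹ φ)
          = (Matrix.toEuclideanCLM (𝕜 := ℝ) T * Matrix.toEuclideanCLM (𝕜 := ℝ) T⁻¹) φ := rfl
        _ = (Matrix.toEuclideanCLM (𝕜 := ℝ) (T * T⁻¹)) φ := by rw [map_mul]
        _ = (Matrix.toEuclideanCLM (𝕜 := ℝ) (1 : Matrix _ _ ℝ)) φ := by rw [hTG]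
        _ = φ := by rw [map_one]; exact ContinuousLinearMap.one_apply φ
    rw [h2] at h1
    calc ‖Matrix.toEuclideanCLM (𝕜 := ℝ) T⁻¹ φ‖
        = (10/δ) * (δ/10 * ‖Matrix.toEuclideanCLM (𝕜 := ℝ) T⁻¹ φ‖) := by
          field_simp
      _ ≤ (10/δ) * ‖φ‖ := mul_le_mul_of_nonneg_left h1 (by positivity)
  refine ⟨hUnit, ?_, ?_⟩
  · exact ContinuousLinearMap.opNorm_le_bound _ (by positivity) hGnorm
  · -- entry bound for the inverse
    have hGentry : ∀ x y : {z // z ∈ Λ}, |T⁻¹ x y| ≤ 10/δ := by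
      intro x y
      set φ : EuclideanSpace ℝ {z // z ∈ Λ} := EuclideanSpace.single y (1:ℝ) with hφ
      have hcol : ∀ z, (Matrix.toEuclideanCLM (𝕜 := ℝ) T⁻¹ φ) z = T⁻¹ z y := by
        intro z
        rw [toE_coord]
        have hps : (fun w => φ w) = Pi.single y (1:ℝ) := by
          funext w
          rw [hφ, EuclideanSpace.single_apply, Pi.single_apply]
        rw [hps]
        simp [Matrix.mulVec_single]
      have h1 : |T⁻¹ x y| ≤ ‖Matrix.toEuclideanCLM (𝕜 := ℝ) T⁻¹ φ‖ := by
        rw [euc_norm_sq, ← hcol x]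
        have h2 : ((Matrix.toEuclideanCLM (𝕜 := ℝ) T⁻¹ φ) x) ^ 2
            ≤ ∑ z, ((Matrix.toEuclideanCLM (𝕜 := ℝ) T⁻¹ φ) z) ^ 2 :=
          Finset.single_le_sum (f := fun z => ((Matrix.toEuclideanCLM (𝕜 := ℝ) T⁻¹ φ) z) ^ 2)
            (fun z _ => sq_nonneg _) (Finset.mem_univ x)
        calc |(Matrix.toEuclideanCLM (𝕜 := ℝ) T⁻¹ φ) x|
            = Real.sqrt (((Matrix.toEuclideanCLM (𝕜 := ℝ) T⁻¹ φ) x) ^ 2) :=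
              (Real.sqrt_sq_eq_abs _).symm
          _ ≤ _ := Real.sqrt_le_sqrt h2
      have h3 : ‖φ‖ = 1 := by rw [hφ, EuclideanSpace.norm_single]; norm_num
      have h4 := hGnorm φ
      rw [h3, mul_one] at h4
      exact h1.trans h4
    -- Neumann-type iteration
    have hdvne : ∀ x, dv x ≠ 0 := by
      intro x h
      have := hdiag x
      rw [h, abs_zero] at this
      nlinarith
    set Nm : Matrix {z // z ∈ Λ} {z // z ∈ Λ} ℝ := Matrix.diagonal (fun x => (dv x)⁻¹) with hNm
    have hND : Nm * Dm = 1 := by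
      rw [hNm, hDm, Matrix.diagonal_mul_diagonal]
      have : (fun x : {z // z ∈ Λ} => (dv x)⁻¹ * dv x) = fun _ => (1:ℝ) := by
        funext x
        exact inv_mul_cancel₀ (hdvne x)
      rw [this, Matrix.diagonal_one]
    set P : Matrix {z // z ∈ Λ} {z // z ∈ Λ} ℝ := Nm * Am with hP
    have hGNP : T⁻¹ = Nm - P * T⁻¹ := by
      have h1 : (1 + P) * T⁻¹ = Nm := by
        calc (1 + P) * T⁻¹ = (Nm * Dm + Nm * Am) * T⁻¹ := by rw [hND, hP]
          _ = (Nm * (Dm + Am)) * T⁻¹ := by rw [mul_add]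
          _ = Nm * (T * T⁻¹) := by rw [← hTDA, Matrix.mul_assoc]
          _ = Nm := by rw [hTG, Matrix.mul_one]
      calc T⁻¹ = (1 + P) * T⁻¹ - P * T⁻¹ := by noncomm_ring
        _ = Nm - P * T⁻¹ := by rw [h1]
    set β : ℝ := 2 * ε / δ with hβ
    have hβnn : 0 ≤ β := by positivity
    have hPbnd : ∀ x y, |(-P) x y| ≤ if nrm1 (x.1 - y.1) = 1 then β else 0 := by
      intro x y
      rw [Matrix.neg_apply, abs_neg, hP, hNm, Matrix.diagonal_mul, hAm']
      split_ifs with h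
      · rw [abs_mul, abs_inv]
        have hd7 : (0:ℝ) < 7/10*δ := by positivity
        have hinv : |dv x|⁻¹ ≤ (7/10*δ)⁻¹ := by
          apply inv_anti₀ hd7 (hdiag x)
        have h2 : (7/10*δ)⁻¹ ≤ 2/δ := by
          rw [inv_eq_one_div, div_le_div_iff₀ (by positivity) (by positivity)]
          nlinarith
        calc |dv x|⁻¹ * |ε| = |dv x|⁻¹ * ε := by rw [abs_of_nonneg hεnn]
          _ ≤ (2/δ) * ε := mul_le_mul_of_nonneg_right (hinv.trans h2) hεnn
          _ = β := by rw [hβ]; ring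
      · simp
    intro x y hxy
    set n : ℕ := (nrm1 (x.1 - y.1)).toNat with hn
    have hncast : (n:ℤ) = nrm1 (x.1 - y.1) := Int.toNat_of_nonneg (nrm1_nonneg _)
    have hn1 : 1 ≤ n := by
      rcases Nat.eq_zero_or_pos n with h | h
      · exfalso
        rw [h] at hncast
        have h0 : x.1 - y.1 = 0 := nrm1_eq_zero hncast.symm
        exact hxy (Subtype.ext (by rwa [sub_eq_zero] at h0))
      · exact h
    have hiter := green_iter hGNP n
    have hfirst0 : ((∑ j ∈ Finset.range n, (-P)^j) * Nm) x y = 0 := by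
      rw [Finset.sum_mul, Matrix.sum_apply]
      apply Finset.sum_eq_zero
      intro j hj
      rw [hNm, Matrix.mul_diagonal]
      have hj' : ((-P)^j) x y = 0 := by
        apply (mat_pow_bound hβnn (-P) hPbnd j).2 x y
        rw [← hncast]
        exact_mod_cast Finset.mem_range.mp hj
      rw [hj', zero_mul]
    have hGxy : T⁻¹ x y = ((-P)^n * T⁻¹) x y := by
      conv_lhs => rw [hiter]
      rw [Matrix.add_apply, hfirst0, zero_add]
    have habs : |T⁻¹ x y| ≤ (2*d*β)^n * (10/δ) := by
      rw [hGxy, Matrix.mul_apply]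
      calc |∑ z, ((-P)^n) x z * T⁻¹ z y| ≤ ∑ z, |((-P)^n) x z * T⁻¹ z y| :=
            Finset.abs_sum_le_sum_abs _ _
        _ ≤ ∑ z, |((-P)^n) x z| * (10/δ) := by
            apply Finset.sum_le_sum
            intro z _
            rw [abs_mul]
            exact mul_le_mul_of_nonneg_left (hGentry z y) (abs_nonneg _)
        _ = (∑ z, |((-P)^n) x z|) * (10/δ) := by rw [Finset.sum_mul]
        _ ≤ (2*d*β)^n * (10/δ) := by
            apply mul_le_mul_of_nonneg_right ((mat_pow_bound hβnn (-P) hPbnd n).1 x) (by positivity)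
    -- numerics
    set s : ℝ := Real.sqrt ε with hs
    have hspos : 0 < s := Real.sqrt_pos.mpr hε
    have hs2 : s^2 = ε := Real.sq_sqrt hεnn
    have hsδ : s ≤ δ^(10:ℕ) := by
      have h1 : ε ≤ (δ^(10:ℕ))^2 := by
        rw [← pow_mul]
        simpa using hε20
      calc s = Real.sqrt ε := hs
        _ ≤ Real.sqrt ((δ^(10:ℕ))^2) := Real.sqrt_le_sqrt h1
        _ = δ^(10:ℕ) := Real.sqrt_sq (by positivity)
    have hd0 : (0:ℝ) ≤ (d:ℝ) := Nat.cast_nonneg d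
    have h400 : 400*(d:ℝ)*ε ≤ s*δ^2 := by
      have h8 : δ^(8:ℕ) ≤ δ := by
        calc δ^(8:ℕ) ≤ δ^(1:ℕ) := pow_le_pow_of_le_one hδpos.le hδ1 (by norm_num)
          _ = δ := pow_one δ
      have h48 : 400*(d:ℝ)*δ^(8:ℕ) ≤ 1 := by
        have hq : 400*(d:ℝ)*δ ≤ 1 := by
          have h9 : 400*(d:ℝ)*K⁻¹ ≤ 1 := by
            rw [hK, inv_eq_one_div, mul_one_div, div_le_one (by positivity)]
            nlinarith
          nlinarith [hδκ, hδpos.le]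
        nlinarith [hδpos.le, pow_nonneg hδpos.le 8]
      calc 400*(d:ℝ)*ε = 400*d*(s*s) := by rw [← hs2]; ring
        _ ≤ 400*d*(s*δ^(10:ℕ)) := by
            have hss : s*s ≤ s*δ^(10:ℕ) := mul_le_mul_of_nonneg_left hsδ hspos.le
            nlinarith [hss, hd0]
        _ = (400*d*δ^(8:ℕ))*(s*δ^2) := by ring
        _ ≤ 1*(s*δ^2) := mul_le_mul_of_nonneg_right h48 (by positivity)
        _ = s*δ^2 := one_mul _
    have hβs : 2*(d:ℝ)*β ≤ s * (δ/100) := by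
      have h1 : 2*(d:ℝ)*β = 4*d*ε/δ := by rw [hβ]; ring
      rw [h1, div_le_iff₀ hδpos]
      nlinarith
    have hfin : (2*(d:ℝ)*β)^n * (10/δ) ≤ s^n := by
      have h1 : (2*(d:ℝ)*β)^n ≤ (s*(δ/100))^n := pow_le_pow_left₀ (by positivity) hβs n
      have h2 : (s*(δ/100))^n = s^n * (δ/100)^n := mul_pow _ _ n
      have h3 : (δ/100)^n ≤ (δ/100)^(1:ℕ) :=
        pow_le_pow_of_le_one (by positivity) (by linarith) hn1
      have h4 : (0:ℝ) ≤ s^n := pow_nonneg hspos.le n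
      have h5 : (δ/100)^(1:ℕ) = δ/100 := pow_one _
      have h6 : (2*(d:ℝ)*β)^n * (10/δ) ≤ (s^n * (δ/100)) * (10/δ) := by
        apply mul_le_mul_of_nonneg_right _ (by positivity)
        calc (2*(d:ℝ)*β)^n ≤ s^n * (δ/100)^n := by rw [← h2]; exact h1
          _ ≤ s^n * (δ/100) := mul_le_mul_of_nonneg_left (h3.trans (le_of_eq h5)) h4
      have h7 : (s^n * (δ/100)) * (10/δ) = s^n * (1/10) := by
        field_simp
        ring
      rw [h7] at h6
      nlinarith
    have hexp : Real.exp (-(|Real.log ε| / 2) * ((nrm1 (x.1 - y.1) : ℤ):ℝ)) = s^n := by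
      have hεlt1 : ε < 1 := by
        have := hε20.trans (pow_le_pow_of_le_one hδpos.le hδ1 (by norm_num : (1:ℕ) ≤ 20))
        rw [pow_one] at this
        have hδK : δ ≤ K⁻¹ := hδκ
        have : ε ≤ K⁻¹ := this.trans hδK
        have hKbig : K⁻¹ < 1 := by
          rw [hK, inv_lt_one_iff₀]
          right
          linarith
        linarith
      have hlog : Real.log ε < 0 := Real.log_neg hε hεlt1
      have habsl : |Real.log ε| = -Real.log ε := abs_of_neg hlog
      have hcast : ((nrm1 (x.1 - y.1) : ℤ):ℝ) = (n:ℝ) := by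
        rw [← hncast]
        norm_num
      rw [habsl, hcast]
      have harg : -(-Real.log ε/2) * (n:ℝ) = (n:ℝ) * (Real.log ε / 2) := by ring
      rw [harg, Real.exp_nat_mul]
      congr 1
      rw [hs, Real.sqrt_eq_rpow, Real.rpow_def_of_pos hε]
      ring_nf
    rw [hexp]
    exact habs.trans hfin
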